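/- The Killing form of the seven-dimensional Lie algebra P = sl₃(F₃)/(F₃·I) (the quotient of sl₃ over F₃ by its center) is identically zero. -/

import Mathlib

open Matrix LieAlgebra LieAlgebra.SpecialLinear

attribute [local instance] LieRing.ofAssociativeRing

/-- The 3×3 special linear Lie algebra over `F₃`. -/
noncomputable abbrev sl3ZMod3 := sl (Fin 3) (ZMod 3)

/-- The trace of `ad x ∘ ad y` on `gl₃(F₃)` vanishes when `x` and `y` have trace zero. -/
lemma gl3_trace_ad_comp_ad (x y : Matrix (Fin 3) (Fin 3) (ZMod 3))
    (hx : Matrix.trace x = 0) (hy : Matrix.trace y = 0) :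
    LinearMap.trace (ZMod 3) _ ((ad (ZMod 3) (Matrix (Fin 3) (Fin 3) (ZMod 3)) x)
      ∘ₗ (ad (ZMod 3) (Matrix (Fin 3) (Fin 3) (ZMod 3)) y)) = 0 := by
  rw [LinearMap.trace_eq_matrix_trace (ZMod 3) (Matrix.stdBasis (ZMod 3) (Fin 3) (Fin 3))]
  rw [Matrix.trace]
  have h : ∀ p : Fin 3 × Fin 3, (LinearMap.toMatrix (Matrix.stdBasis (ZMod 3) (Fin 3) (Fin 3))
      (Matrix.stdBasis (ZMod 3) (Fin 3) (Fin 3)) ((ad (ZMod 3) _ x) ∘ₗ (ad (ZMod 3) _ y))).diag p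
      = (x * y) p.1 p.1 - x p.1 p.1 * y p.2 p.2 - y p.1 p.1 * x p.2 p.2 + (y * x) p.2 p.2 := by
    rintro ⟨i, j⟩
    rw [Matrix.diag, LinearMap.toMatrix_apply, Matrix.stdBasis_eq_single]
    simp only [LinearMap.comp_apply, ad_apply, Ring.lie_def]
    rw [show ∀ M : Matrix (Fin 3) (Fin 3) (ZMod 3),
        ((Matrix.stdBasis (ZMod 3) (Fin 3) (Fin 3)).repr M) (i, j) = M i j from
      fun M => by simp [Matrix.stdBasis]]
    simp only [Matrix.sub_apply, mul_sub, sub_mul, Matrix.mul_apply]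
    simp [Matrix.single_mul_apply_same, Matrix.mul_single_apply_same,
      Matrix.mul_apply, Matrix.single, Finset.mul_sum, Finset.sum_mul, mul_ite, ite_mul,
      Finset.sum_ite_eq, Finset.sum_ite_eq', ite_and]
    ring
  rw [Finset.sum_congr rfl (fun p _ => h p)]
  simp only [Matrix.trace, Matrix.diag, Fin.sum_univ_three] at hx hy
  have h6 : (6 : ZMod 3) = 0 := by decide
  simp only [Fintype.sum_prod_type, Fin.sum_univ_three, Matrix.mul_apply] at *
  linear_combination ((-2 : ZMod 3) * (y 0 0 + y 1 1 + y 2 2)) * hx +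
    (x 0 0 * y 0 0 + x 0 1 * y 1 0 + x 0 2 * y 2 0 +
     x 1 0 * y 0 1 + x 1 1 * y 1 1 + x 1 2 * y 2 1 +
     x 2 0 * y 0 2 + x 2 1 * y 1 2 + x 2 2 * y 2 2) * h6

/-- The Killing form of `sl₃(F₃)` is identically zero. -/
lemma sl3_killingForm_eq_zero (x y : sl3ZMod3) : killingForm (ZMod 3) sl3ZMod3 x y = 0 := by
  set C : Matrix (Fin 3) (Fin 3) (ZMod 3) →ₗ[ZMod 3] Matrix (Fin 3) (Fin 3) (ZMod 3) :=
    (ad (ZMod 3) _ (x : Matrix (Fin 3) (Fin 3) (ZMod 3))) ∘ₗ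
      (ad (ZMod 3) _ (y : Matrix (Fin 3) (Fin 3) (ZMod 3))) with hC
  have hmem : ∀ z, C z ∈ sl3ZMod3.toSubmodule := by
    intro z
    have hz : C z = ⁅(x : Matrix (Fin 3) (Fin 3) (ZMod 3)),
        ⁅(y : Matrix (Fin 3) (Fin 3) (ZMod 3)), z⁆⁆ := by
      simp [hC, ad_apply]
    show C z ∈ LinearMap.ker (Matrix.traceLinearMap (Fin 3) (ZMod 3) (ZMod 3))
    rw [LinearMap.mem_ker, Matrix.traceLinearMap_apply, hz]
    exact matrix_trace_commutator_zero _ _ _ _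
  set h : Matrix (Fin 3) (Fin 3) (ZMod 3) →ₗ[ZMod 3] sl3ZMod3.toSubmodule :=
    C.codRestrict sl3ZMod3.toSubmodule hmem with hh
  have hfact : C = sl3ZMod3.toSubmodule.subtype ∘ₗ h := rfl
  have hres : (h ∘ₗ sl3ZMod3.toSubmodule.subtype)
      = (ad (ZMod 3) sl3ZMod3 x) ∘ₗ (ad (ZMod 3) sl3ZMod3 y) := by
    refine LinearMap.ext fun z => Subtype.ext ?_
    rfl
  have key : killingForm (ZMod 3) sl3ZMod3 x y = LinearMap.trace (ZMod 3) _ C := by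
    rw [killingForm_apply_apply, ← hres, hfact, LinearMap.trace_comp_comm']
  rw [key, hC]
  exact gl3_trace_ad_comp_ad _ _ x.2 y.2

/-- The Killing form of the seven-dimensional Lie algebra
`P = sl₃(F₃)/(F₃·I)` — the quotient of the Lie algebra of trace-zero 3×3 matrices over
`F₃` by its one-dimensional center of scalar matrices — is identically zero. -/
theorem stmt_19 :
    killingForm (ZMod 3)
      (LieAlgebra.SpecialLinear.sl (Fin 3) (ZMod 3) ⧸
        LieAlgebra.center (ZMod 3) (LieAlgebra.SpecialLinear.sl (Fin 3) (ZMod 3))) = 0 := by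
  set I := LieAlgebra.center (ZMod 3) sl3ZMod3 with hI
  ext a b
  obtain ⟨x, rfl⟩ := LieSubmodule.Quotient.surjective_mk' I a
  obtain ⟨y, rfl⟩ := LieSubmodule.Quotient.surjective_mk' I b
  rw [LinearMap.zero_apply, LinearMap.zero_apply, killingForm_apply_apply]
  set Q := sl3ZMod3 ⧸ I
  set D : sl3ZMod3 →ₗ[ZMod 3] sl3ZMod3 :=
    (ad (ZMod 3) sl3ZMod3 x) ∘ₗ (ad (ZMod 3) sl3ZMod3 y) with hD
  have hker : I.toSubmodule ≤ LinearMap.ker D := by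
    intro z hz
    have hz' : ⁅y, z⁆ = 0 :=
      (LieModule.mem_maxTrivSubmodule (ZMod 3) sl3ZMod3 sl3ZMod3 z).1 hz y
    simp [hD, ad_apply, hz']
  set g : Q →ₗ[ZMod 3] sl3ZMod3 := I.toSubmodule.liftQ D hker with hg
  have hfact : (ad (ZMod 3) Q ((LieSubmodule.Quotient.mk' I) x))
      ∘ₗ (ad (ZMod 3) Q ((LieSubmodule.Quotient.mk' I) y)) = I.toSubmodule.mkQ ∘ₗ g := by
    refine Submodule.linearMap_qext _ ?_
    ext z
    show ⁅(LieSubmodule.Quotient.mk' I) x, ⁅(LieSubmodule.Quotient.mk' I) y,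
      (LieSubmodule.Quotient.mk' I) z⁆⁆ = I.toSubmodule.mkQ (D z)
    have h2 : I.toSubmodule.mkQ (D z) = (LieSubmodule.Quotient.mk' I) ⁅x, ⁅y, z⁆⁆ := rfl
    rw [h2]; rfl
  rw [hfact, LinearMap.trace_comp_comm', Submodule.liftQ_mkQ]
  exact sl3_killingForm_eq_zero x y
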